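/- Let Θ̂ minimize ‖Θ‖_* over matrices Θ ∈ ℝ^{k×p} satisfying X(Θ) = X(Θ*), where X is linear and Θ* has rank r. Write the error Δ = Θ̂ − Θ* using the decomposition Δ = Δ' + Δ'' from the SVD-block construction (with rank(Δ') ≤ 2r and ‖Θ* + Δ''‖_* = ‖Θ*‖_* + ‖Δ''‖_*). Then ‖Δ''‖_* ≤ ‖Δ'‖_*, and consequently ‖Δ‖_* ≤ 2√(2r)·‖Δ‖_F. -/

import Mathlib

open Matrix BigOperators

noncomputable def frobNorm {k p : ℕ} (A : Matrix (Fin k) (Fin p) ℝ) : ℝ :=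
  Real.sqrt (∑ i, ∑ j, (A i j) ^ 2)

noncomputable def singVal {k p : ℕ} (A : Matrix (Fin k) (Fin p) ℝ) (i : Fin p) : ℝ :=
  Real.sqrt ((Matrix.isHermitian_conjTranspose_mul_self A).eigenvalues i)

noncomputable def nuclearNorm {k p : ℕ} (A : Matrix (Fin k) (Fin p) ℝ) : ℝ :=
  ∑ i, singVal A i

noncomputable def opNorm {k p : ℕ} (A : Matrix (Fin k) (Fin p) ℝ) : ℝ :=
  ⨆ i, singVal A i

noncomputable def euclNorm {n : ℕ} (v : Fin n → ℝ) : ℝ :=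
  Real.sqrt (∑ i, (v i) ^ 2)

namespace NuclearAux

variable {k p : ℕ}

noncomputable def evs (A : Matrix (Fin k) (Fin p) ℝ) : Fin p → ℝ :=
  (Matrix.isHermitian_conjTranspose_mul_self A).eigenvalues

noncomputable def evU (A : Matrix (Fin k) (Fin p) ℝ) : Matrix (Fin p) (Fin p) ℝ :=
  (Matrix.isHermitian_conjTranspose_mul_self A).eigenvectorUnitary

lemma evs_nonneg (A : Matrix (Fin k) (Fin p) ℝ) (i : Fin p) : 0 ≤ evs A i :=
  (Matrix.posSemidef_conjTranspose_mul_self A).eigenvalues_nonneg i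

lemma hU1 (A : Matrix (Fin k) (Fin p) ℝ) : star (evU A) * evU A = 1 :=
  ((Unitary.mem_iff).mp ((Matrix.isHermitian_conjTranspose_mul_self A).eigenvectorUnitary).2).1

lemma hU2 (A : Matrix (Fin k) (Fin p) ℝ) : evU A * star (evU A) = 1 :=
  ((Unitary.mem_iff).mp ((Matrix.isHermitian_conjTranspose_mul_self A).eigenvectorUnitary).2).2

lemma spec (A : Matrix (Fin k) (Fin p) ℝ) :
    Aᴴ * A = evU A * Matrix.diagonal (evs A) * star (evU A) := by
  conv_lhs => rw [(Matrix.isHermitian_conjTranspose_mul_self A).spectral_theorem]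
  rw [Unitary.conjStarAlgAut_apply, RCLike.ofReal_real_eq_id, Function.id_comp]
  rfl

lemma spec' (A : Matrix (Fin k) (Fin p) ℝ) :
    star (evU A) * (Aᴴ * A) * evU A = Matrix.diagonal (evs A) := by
  rw [spec A]
  rw [show star (evU A) * (evU A * Matrix.diagonal (evs A) * star (evU A)) * evU A
      = (star (evU A) * evU A) * Matrix.diagonal (evs A) * (star (evU A) * evU A) by
    simp only [Matrix.mul_assoc], hU1, Matrix.one_mul, Matrix.mul_one]

lemma psd_diag_nonneg {n : Type*} [Fintype n] [DecidableEq n] {M : Matrix n n ℝ}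
    (h : M.PosSemidef) (i : n) : 0 ≤ M i i := by
  exact h.diag_nonneg

lemma nuclear_eq (A : Matrix (Fin k) (Fin p) ℝ) :
    nuclearNorm A = ∑ i, Real.sqrt (evs A i) := rfl

/-- trace duality: if `1 - Wᴴ W` is PSD then `tr(Wᴴ A) ≤ ‖A‖_*`. -/
lemma trace_le_nuclear (A W : Matrix (Fin k) (Fin p) ℝ)
    (hW : (1 - Wᴴ * W).PosSemidef) : (Wᴴ * A).trace ≤ nuclearNorm A := by
  set U := evU A with hU
  have key : (Wᴴ * A).trace = ∑ i, ∑ a, (W * U) a i * (A * U) a i := by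
    have h1 : (W * U)ᴴ * (A * U) = star U * (Wᴴ * A * U) := by
      simp only [Matrix.conjTranspose_mul, Matrix.star_eq_conjTranspose, Matrix.mul_assoc]
    have h2 : ((W * U)ᴴ * (A * U)).trace = (Wᴴ * A).trace := by
      rw [h1, Matrix.trace_mul_comm, Matrix.mul_assoc, hU2 A, Matrix.mul_one]
    rw [← h2]
    simp only [Matrix.trace, Matrix.diag_apply, Matrix.mul_apply, Matrix.conjTranspose_apply,
      star_trivial]
  have colA : ∀ i, ∑ a, (A * U) a i ^ 2 = evs A i := by
    intro i
    have h : ((A * U)ᴴ * (A * U)) i i = evs A i := by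
      have : (A * U)ᴴ * (A * U) = star U * (Aᴴ * A) * U := by
        simp only [Matrix.conjTranspose_mul, Matrix.star_eq_conjTranspose, Matrix.mul_assoc]
      rw [this, spec' A, Matrix.diagonal_apply_eq]
    rw [← h]
    simp only [Matrix.mul_apply, Matrix.conjTranspose_apply, star_trivial, sq]
  have colW : ∀ i, ∑ a, (W * U) a i ^ 2 ≤ 1 := by
    intro i
    have h : ∑ a, (W * U) a i ^ 2 = (star U * (Wᴴ * W) * U) i i := by
      have : (W * U)ᴴ * (W * U) = star U * (Wᴴ * W) * U := by
        simp only [Matrix.conjTranspose_mul, Matrix.star_eq_conjTranspose, Matrix.mul_assoc]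
      rw [← this]
      simp only [Matrix.mul_apply, Matrix.conjTranspose_apply, star_trivial, sq]
    have hpsd : (star U * (1 - Wᴴ * W) * U).PosSemidef := by
      have := hW.conjTranspose_mul_mul_same U
      rwa [Matrix.star_eq_conjTranspose]
    have hdiag := psd_diag_nonneg hpsd i
    have hexp : star U * (1 - Wᴴ * W) * U = 1 - star U * (Wᴴ * W) * U := by
      rw [Matrix.mul_sub, Matrix.sub_mul, Matrix.mul_one, hU1 A]
    rw [hexp] at hdiag
    have h1 : (1 : Matrix (Fin p) (Fin p) ℝ) i i = 1 := Matrix.one_apply_eq i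
    simp only [Matrix.sub_apply, h1] at hdiag
    linarith [h, hdiag]
  rw [key, nuclear_eq]
  apply Finset.sum_le_sum
  intro i _
  calc ∑ a, (W * U) a i * (A * U) a i
      ≤ Real.sqrt (∑ a, (W * U) a i ^ 2) * Real.sqrt (∑ a, (A * U) a i ^ 2) :=
        Real.sum_mul_le_sqrt_mul_sqrt _ _ _
    _ ≤ 1 * Real.sqrt (evs A i) := by
        rw [colA i]
        apply mul_le_mul_of_nonneg_right _ (Real.sqrt_nonneg _)
        calc Real.sqrt (∑ a, (W * U) a i ^ 2) ≤ Real.sqrt 1 := Real.sqrt_le_sqrt (colW i)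
          _ = 1 := Real.sqrt_one
    _ = Real.sqrt (evs A i) := one_mul _

/-- existence of a dual attaining matrix -/
lemma exists_dual (A : Matrix (Fin k) (Fin p) ℝ) :
    ∃ W : Matrix (Fin k) (Fin p) ℝ,
      (1 - Wᴴ * W).PosSemidef ∧ (Wᴴ * A).trace = nuclearNorm A := by
  classical
  set U := evU A with hU
  set d := evs A with hd
  set e : Fin p → ℝ := fun i => if d i = 0 then 0 else (Real.sqrt (d i))⁻¹ with he
  refine ⟨A * (U * Matrix.diagonal e * star U), ?_, ?_⟩
  · have hWHW : (A * (U * Matrix.diagonal e * star U))ᴴ * (A * (U * Matrix.diagonal e * star U))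
        = U * Matrix.diagonal (fun i => e i * d i * e i) * star U := by
      have hsymH : (U * Matrix.diagonal e * star U)ᴴ = U * Matrix.diagonal e * star U := by
        simp only [Matrix.conjTranspose_mul, Matrix.star_eq_conjTranspose,
          Matrix.conjTranspose_conjTranspose, Matrix.diagonal_conjTranspose]
        simp [Matrix.mul_assoc, star_trivial, Pi.star_def]
      rw [Matrix.conjTranspose_mul, hsymH]
      calc U * Matrix.diagonal e * star U * Aᴴ * (A * (U * Matrix.diagonal e * star U))
          = U * Matrix.diagonal e * (star U * (Aᴴ * A) * U) * Matrix.diagonal e * star U := by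
            simp only [Matrix.mul_assoc]
        _ = U * (Matrix.diagonal e * Matrix.diagonal d * Matrix.diagonal e) * star U := by
            rw [spec' A]; simp only [Matrix.mul_assoc]; rfl
        _ = U * Matrix.diagonal (fun i => e i * d i * e i) * star U := by
            rw [Matrix.diagonal_mul_diagonal, Matrix.diagonal_mul_diagonal]
    rw [hWHW]
    have h1 : (1 : Matrix (Fin p) (Fin p) ℝ) = U * 1 * star U := by
      rw [Matrix.mul_one, hU2 A]
    rw [h1, show U * 1 * star U - U * Matrix.diagonal (fun i => e i * d i * e i) * star U
        = U * (1 - Matrix.diagonal (fun i => e i * d i * e i)) * star U by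
      rw [Matrix.mul_sub, Matrix.sub_mul]]
    have hdpsd : (1 - Matrix.diagonal (fun i => e i * d i * e i)).PosSemidef := by
      rw [← Matrix.diagonal_one, Matrix.diagonal_sub]
      apply Matrix.PosSemidef.diagonal
      intro i
      by_cases hdi : d i = 0
      · simp [he, hdi]
      · have hpos : 0 < d i := lt_of_le_of_ne (evs_nonneg A i) (Ne.symm hdi)
        have : e i * d i * e i = 1 := by
          rw [he]
          simp only [hdi, if_false]
          rw [show (Real.sqrt (d i))⁻¹ * d i * (Real.sqrt (d i))⁻¹
              = d i / (Real.sqrt (d i) * Real.sqrt (d i)) by ring]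
          rw [Real.mul_self_sqrt (le_of_lt hpos), div_self (ne_of_gt hpos)]
        simp [this]
    have := hdpsd.mul_mul_conjTranspose_same U
    rwa [Matrix.star_eq_conjTranspose]
  · have hWA : (A * (U * Matrix.diagonal e * star U))ᴴ * A
        = U * Matrix.diagonal (fun i => e i * d i) * star U := by
      have hsymH : (U * Matrix.diagonal e * star U)ᴴ = U * Matrix.diagonal e * star U := by
        simp only [Matrix.conjTranspose_mul, Matrix.star_eq_conjTranspose,
          Matrix.conjTranspose_conjTranspose, Matrix.diagonal_conjTranspose]
        simp [Matrix.mul_assoc, star_trivial, Pi.star_def]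
      rw [Matrix.conjTranspose_mul, hsymH]
      calc U * Matrix.diagonal e * star U * Aᴴ * A
          = U * (Matrix.diagonal e * (star U * (Aᴴ * A) * U)) * star U := by
            calc U * Matrix.diagonal e * star U * Aᴴ * A
                = U * Matrix.diagonal e * star U * Aᴴ * (A * (U * star U)) := by
                  rw [hU2 A, Matrix.mul_one]
              _ = U * (Matrix.diagonal e * (star U * (Aᴴ * A) * U)) * star U := by
                  simp only [Matrix.mul_assoc]
        _ = U * (Matrix.diagonal e * Matrix.diagonal d) * star U := by
            rw [spec' A]
        _ = U * Matrix.diagonal (fun i => e i * d i) * star U := by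
            rw [Matrix.diagonal_mul_diagonal]
    rw [hWA, Matrix.trace_mul_comm, ← Matrix.mul_assoc, hU1 A, Matrix.one_mul,
      Matrix.trace_diagonal, nuclear_eq]
    apply Finset.sum_congr rfl
    intro i _
    by_cases hdi : d i = 0
    · have hdi' : evs A i = 0 := hdi
      simp [he, hd, hdi', Real.sqrt_zero]
    · have hdi' : ¬ evs A i = 0 := hdi
      have hpos : 0 < evs A i := lt_of_le_of_ne (evs_nonneg A i) (Ne.symm hdi')
      have hsq : Real.sqrt (evs A i) * Real.sqrt (evs A i) = evs A i :=
        Real.mul_self_sqrt (le_of_lt hpos)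
      have hsne : Real.sqrt (evs A i) ≠ 0 := by positivity
      show (if evs A i = 0 then 0 else (Real.sqrt (evs A i))⁻¹) * evs A i = Real.sqrt (evs A i)
      simp only [hdi', if_false]
      rw [inv_mul_eq_div, div_eq_iff hsne]
      linarith [hsq]

lemma eigenvalues_congr {n : Type*} [Fintype n] [DecidableEq n] {M N : Matrix n n ℝ}
    (h : M = N) (hM : M.IsHermitian) (hN : N.IsHermitian) :
    hM.eigenvalues = hN.eigenvalues := by subst h; rfl

lemma evs_neg (A : Matrix (Fin k) (Fin p) ℝ) : evs (-A) = evs A :=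
  eigenvalues_congr (by simp) _ _

lemma nuclear_neg (A : Matrix (Fin k) (Fin p) ℝ) : nuclearNorm (-A) = nuclearNorm A := by
  rw [nuclear_eq, nuclear_eq, evs_neg]

lemma nuclear_nonneg (A : Matrix (Fin k) (Fin p) ℝ) : 0 ≤ nuclearNorm A :=
  Finset.sum_nonneg fun i _ => Real.sqrt_nonneg _

lemma frob_nonneg (A : Matrix (Fin k) (Fin p) ℝ) : 0 ≤ frobNorm A := Real.sqrt_nonneg _

lemma nuclear_triangle (A B : Matrix (Fin k) (Fin p) ℝ) :
    nuclearNorm (A + B) ≤ nuclearNorm A + nuclearNorm B := by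
  obtain ⟨W, hpsd, htr⟩ := exists_dual (A + B)
  have hsplit : (Wᴴ * (A + B)).trace = (Wᴴ * A).trace + (Wᴴ * B).trace := by
    rw [Matrix.mul_add, Matrix.trace_add]
  linarith [trace_le_nuclear A W hpsd, trace_le_nuclear B W hpsd]

lemma frob_sq (A : Matrix (Fin k) (Fin p) ℝ) : frobNorm A ^ 2 = ∑ i, evs A i := by
  have h1 : frobNorm A ^ 2 = ∑ i, ∑ j, A i j ^ 2 := by
    rw [frobNorm]
    exact Real.sq_sqrt (Finset.sum_nonneg fun i _ => Finset.sum_nonneg fun j _ => sq_nonneg _)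
  have h2 : (Aᴴ * A).trace = ∑ i, ∑ j, A i j ^ 2 := by
    simp only [Matrix.trace, Matrix.diag_apply, Matrix.mul_apply, Matrix.conjTranspose_apply,
      star_trivial, ← sq]
    exact Finset.sum_comm
  have h3 : (Aᴴ * A).trace = ∑ i, evs A i := by
    conv_lhs => rw [spec A]
    rw [Matrix.trace_mul_comm, ← Matrix.mul_assoc, hU1 A, Matrix.one_mul, Matrix.trace_diagonal]
  rw [h1, ← h2, h3]

lemma nuclear_le_rank (A : Matrix (Fin k) (Fin p) ℝ) :
    nuclearNorm A ≤ Real.sqrt (A.rank) * frobNorm A := by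
  classical
  set d := evs A with hd
  set s : Finset (Fin p) := Finset.univ.filter (fun i => d i ≠ 0) with hs
  have h0 : nuclearNorm A = ∑ i ∈ s, Real.sqrt (d i) := by
    rw [nuclear_eq]
    symm
    apply Finset.sum_filter_of_ne
    intro i _ hne
    intro hzero
    exact hne (by rw [hd] at hzero ⊢; rw [hzero, Real.sqrt_zero])
  have hcs : ∑ i ∈ s, Real.sqrt (d i) ≤ Real.sqrt (∑ i ∈ s, d i) * Real.sqrt (s.card) := by
    have h := Real.sum_mul_le_sqrt_mul_sqrt s (fun i => Real.sqrt (d i)) (fun _ => 1)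
    simp only [mul_one, one_pow, Finset.sum_const, nsmul_eq_mul] at h
    have hrw : ∑ i ∈ s, Real.sqrt (d i) ^ 2 = ∑ i ∈ s, d i :=
      Finset.sum_congr rfl fun i _ => Real.sq_sqrt (evs_nonneg A i)
    rwa [hrw] at h
  have hsum : ∑ i ∈ s, d i ≤ frobNorm A ^ 2 := by
    rw [frob_sq]
    exact Finset.sum_le_sum_of_subset_of_nonneg (Finset.subset_univ s)
      (fun i _ _ => evs_nonneg A i)
  have hcard : A.rank = s.card := by
    have h1 : (Aᴴ * A).rank = A.rank := Matrix.rank_conjTranspose_mul_self A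
    have h2 := (Matrix.isHermitian_conjTranspose_mul_self A).rank_eq_card_non_zero_eigs
    rw [← h1, h2, Fintype.card_subtype]
    rfl
  calc nuclearNorm A = ∑ i ∈ s, Real.sqrt (d i) := h0
    _ ≤ Real.sqrt (∑ i ∈ s, d i) * Real.sqrt (s.card) := hcs
    _ ≤ frobNorm A * Real.sqrt (A.rank) := by
        apply mul_le_mul _ _ (Real.sqrt_nonneg _) (frob_nonneg A)
        · calc Real.sqrt (∑ i ∈ s, d i) ≤ Real.sqrt (frobNorm A ^ 2) := Real.sqrt_le_sqrt hsum
            _ = frobNorm A := Real.sqrt_sq (frob_nonneg A)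
        · rw [hcard]
    _ = Real.sqrt (A.rank) * frobNorm A := mul_comm _ _

end NuclearAux

theorem stmt_13 {k p N : ℕ}
    (X : Matrix (Fin k) (Fin p) ℝ →ₗ[ℝ] (Fin N → ℝ))
    (Θs Θhat : Matrix (Fin k) (Fin p) ℝ) (r : ℕ)
    (hrank : Θs.rank = r)
    (hfeas : X Θhat = X Θs)
    (hmin : ∀ Θ : Matrix (Fin k) (Fin p) ℝ, X Θ = X Θs → nuclearNorm Θhat ≤ nuclearNorm Θ)
    (Δ Δ' Δ'' : Matrix (Fin k) (Fin p) ℝ)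
    (hΔ : Δ = Θhat - Θs)
    (hdecomp : Δ = Δ' + Δ'')
    (hrank' : Δ'.rank ≤ 2 * r)
    (hfrob : frobNorm Δ' ≤ frobNorm Δ)
    (hadd : nuclearNorm (Θs + Δ'') = nuclearNorm Θs + nuclearNorm Δ'') :
    nuclearNorm Δ'' ≤ nuclearNorm Δ' ∧
    nuclearNorm Δ ≤ 2 * Real.sqrt (2 * r) * frobNorm Δ := by
  open NuclearAux in
  have hts : nuclearNorm Θhat ≤ nuclearNorm Θs := hmin Θs rfl
  have hsplit : Θs + Δ'' = Θhat + (-Δ') := by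
    have h : Θhat - Θs = Δ' + Δ'' := by rw [← hΔ, hdecomp]
    have h2 : Θhat = Θs + (Δ' + Δ'') := by rw [← h]; abel
    rw [h2]; abel
  have t1 : nuclearNorm (Θs + Δ'') ≤ nuclearNorm Θhat + nuclearNorm Δ' := by
    rw [hsplit]
    have := NuclearAux.nuclear_triangle Θhat (-Δ')
    rwa [NuclearAux.nuclear_neg] at this
  have part1 : nuclearNorm Δ'' ≤ nuclearNorm Δ' := by
    rw [hadd] at t1; linarith
  refine ⟨part1, ?_⟩
  have tΔ : nuclearNorm Δ ≤ nuclearNorm Δ' + nuclearNorm Δ'' := by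
    rw [hdecomp]; exact NuclearAux.nuclear_triangle _ _
  have h2' : nuclearNorm Δ ≤ 2 * nuclearNorm Δ' := by linarith
  have h3' : nuclearNorm Δ' ≤ Real.sqrt (Δ'.rank) * frobNorm Δ' := NuclearAux.nuclear_le_rank _
  have h4 : Real.sqrt (Δ'.rank : ℝ) ≤ Real.sqrt (2 * r) := by
    apply Real.sqrt_le_sqrt
    have : (Δ'.rank : ℝ) ≤ ((2 * r : ℕ) : ℝ) := by exact_mod_cast hrank'
    simpa [Nat.cast_mul] using this
  have h5 : Real.sqrt (Δ'.rank : ℝ) * frobNorm Δ' ≤ Real.sqrt (2 * r) * frobNorm Δ :=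
    mul_le_mul h4 hfrob (NuclearAux.frob_nonneg _) (Real.sqrt_nonneg _)
  calc nuclearNorm Δ ≤ 2 * nuclearNorm Δ' := h2'
    _ ≤ 2 * (Real.sqrt (Δ'.rank) * frobNorm Δ') := by linarith
    _ ≤ 2 * (Real.sqrt (2 * r) * frobNorm Δ) := by linarith
    _ = 2 * Real.sqrt (2 * r) * frobNorm Δ := by ring
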